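/- Let M be a d×n real matrix of full row rank d. Then the Lebesgue volume of the zonotope Z(M) equals the sum, over all d-element subsets B ⊆ {1,…,n}, of |det M_B|, where M_B denotes the d×d submatrix of M consisting of the columns indexed by B. -/

import Mathlib

open MeasureTheory Set Pointwise
open scoped ENNReal


def zonotope {d n : ℕ} (M : Matrix (Fin d) (Fin n) ℝ) : Set (Fin d → ℝ) :=
  {y | ∃ x : Fin n → ℝ, (∀ i, x i ∈ Set.Icc (0 : ℝ) 1) ∧ y = M.mulVec x}

noncomputable def zS {d n : ℕ} (M : Matrix (Fin d) (Fin n) ℝ) : ℝ :=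
  ∑ B : Finset (Fin n), if h : B.card = d then |(M.submatrix id (B.orderEmbOfFin h)).det| else 0

lemma zS_nonneg {d n : ℕ} (M : Matrix (Fin d) (Fin n) ℝ) : 0 ≤ zS M := by
  apply Finset.sum_nonneg
  intro B _
  split <;> simp [abs_nonneg]

lemma zonotope_eq {d n : ℕ} (M : Matrix (Fin d) (Fin n) ℝ) :
    zonotope M = Matrix.toLin' M '' (Set.univ.pi fun _ => Set.Icc (0:ℝ) 1) := by
  ext y
  simp only [zonotope, Set.mem_image, Set.mem_pi, Set.mem_univ, forall_true_left,
    Matrix.toLin'_apply, Set.mem_setOf_eq]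
  constructor
  · rintro ⟨x, hx, rfl⟩; exact ⟨x, fun i => hx i, rfl⟩
  · rintro ⟨x, hx, rfl⟩; exact ⟨x, fun i => hx i, rfl⟩

lemma isCompact_zonotope {d n : ℕ} (M : Matrix (Fin d) (Fin n) ℝ) : IsCompact (zonotope M) := by
  rw [zonotope_eq]
  exact ((isCompact_univ_pi fun _ => isCompact_Icc).image
    (Matrix.toLin' M).continuous_of_finiteDimensional)

lemma convex_zonotope {d n : ℕ} (M : Matrix (Fin d) (Fin n) ℝ) : Convex ℝ (zonotope M) := by
  rw [zonotope_eq]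
  exact (convex_pi fun _ _ => convex_Icc 0 1).linear_image _

lemma zero_mem_zonotope {d n : ℕ} (M : Matrix (Fin d) (Fin n) ℝ) : (0 : Fin d → ℝ) ∈ zonotope M :=
  ⟨0, fun i => ⟨le_refl _, zero_le_one⟩, by simp⟩

lemma measurableSet_zonotope {d n : ℕ} (M : Matrix (Fin d) (Fin n) ℝ) :
    MeasurableSet (zonotope M) := (isCompact_zonotope M).isClosed.measurableSet

lemma zonotope_mul {d n : ℕ} (T : Matrix (Fin d) (Fin d) ℝ) (M : Matrix (Fin d) (Fin n) ℝ) :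
    zonotope (T * M) = Matrix.toLin' T '' zonotope M := by
  ext y
  constructor
  · rintro ⟨x, hx, rfl⟩
    exact ⟨M.mulVec x, ⟨x, hx, rfl⟩, by rw [Matrix.toLin'_apply, Matrix.mulVec_mulVec]⟩
  · rintro ⟨z, ⟨x, hx, rfl⟩, rfl⟩
    exact ⟨x, hx, by rw [Matrix.toLin'_apply, Matrix.mulVec_mulVec]⟩

lemma volume_zonotope_mul {d n : ℕ} (T : Matrix (Fin d) (Fin d) ℝ) (M : Matrix (Fin d) (Fin n) ℝ) :
    volume (zonotope (T * M)) = ENNReal.ofReal |T.det| * volume (zonotope M) := by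
  rw [zonotope_mul, Measure.addHaar_image_linearMap, LinearMap.det_toLin']

lemma zS_mul {d n : ℕ} (T : Matrix (Fin d) (Fin d) ℝ) (M : Matrix (Fin d) (Fin n) ℝ) :
    zS (T * M) = |T.det| * zS M := by
  unfold zS
  rw [Finset.mul_sum]
  refine Finset.sum_congr rfl fun B _ => ?_
  by_cases h : B.card = d
  · rw [dif_pos h, dif_pos h]
    have : (T * M).submatrix id (B.orderEmbOfFin h) = T * M.submatrix id (B.orderEmbOfFin h) := by
      have := Matrix.submatrix_mul T M id (id : Fin d → Fin d) (B.orderEmbOfFin h)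
        Function.bijective_id
      simpa using this
    rw [this, Matrix.det_mul, abs_mul]
  · rw [dif_neg h, dif_neg h, mul_zero]

lemma zonotope_succ {d n : ℕ} (M : Matrix (Fin d) (Fin (n+1)) ℝ) :
    zonotope M = {z | ∃ y ∈ zonotope (M.submatrix id Fin.castSucc),
      ∃ t ∈ Set.Icc (0:ℝ) 1, z = y + t • (fun i => M i (Fin.last n))} := by
  ext z
  constructor
  · rintro ⟨x, hx, rfl⟩
    refine ⟨(M.submatrix id Fin.castSucc).mulVec (x ∘ Fin.castSucc),
      ⟨x ∘ Fin.castSucc, fun i => hx _, rfl⟩, x (Fin.last n), hx _, ?_⟩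
    funext i
    simp only [Matrix.mulVec, dotProduct, Matrix.submatrix_apply, id_eq,
      Function.comp_apply, Pi.add_apply, Pi.smul_apply, smul_eq_mul]
    rw [Fin.sum_univ_castSucc]
    ring
  · rintro ⟨y, ⟨x', hx', rfl⟩, t, ht, rfl⟩
    refine ⟨Fin.snoc x' t, ?_, ?_⟩
    · intro i
      refine Fin.lastCases ?_ ?_ i
      · rw [Fin.snoc_last]; exact ht
      · intro j; rw [Fin.snoc_castSucc]; exact hx' j
    · funext i
      simp only [Matrix.mulVec, dotProduct, Matrix.submatrix_apply, id_eq,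
        Function.comp_apply, Pi.add_apply, Pi.smul_apply, smul_eq_mul]
      rw [Fin.sum_univ_castSucc]
      simp [Fin.snoc_castSucc, Fin.snoc_last]
      ring
  
lemma proj_zonotope {d n : ℕ} (A : Matrix (Fin (d+1)) (Fin n) ℝ) :
    (fun y => y ∘ Fin.castSucc) '' zonotope A = zonotope (A.submatrix Fin.castSucc id) := by
  ext w
  constructor
  · rintro ⟨y, ⟨x, hx, rfl⟩, rfl⟩
    refine ⟨x, hx, ?_⟩
    funext i
    simp [Matrix.mulVec, dotProduct]
  · rintro ⟨x, hx, rfl⟩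
    refine ⟨A.mulVec x, ⟨x, hx, rfl⟩, ?_⟩
    funext i
    simp [Matrix.mulVec, dotProduct]


lemma exists_mat {d : ℕ} (v : Fin d → ℝ) (hv : v ≠ 0) (k : Fin d) :
    ∃ T : Matrix (Fin d) (Fin d) ℝ, IsUnit T.det ∧ T.mulVec v = Pi.single k 1 := by
  have hli : LinearIndepOn ℝ id ({v} : Set (Fin d → ℝ)) := LinearIndepOn.singleton hv
  let b := Module.Basis.extend hli
  have hmem : v ∈ hli.extend (Set.subset_univ _) := hli.subset_extend _ rfl
  have : FiniteDimensional ℝ (Fin d → ℝ) := by infer_instance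
  let e0 : hli.extend (Set.subset_univ _) ≃ Fin d := b.indexEquiv (Pi.basisFun ℝ (Fin d))
  let e : hli.extend (Set.subset_univ _) ≃ Fin d := e0.trans (Equiv.swap (e0 ⟨v, hmem⟩) k)
  let f := b.equiv (Pi.basisFun ℝ (Fin d)) e
  refine ⟨LinearMap.toMatrix' (f : (Fin d → ℝ) →ₗ[ℝ] (Fin d → ℝ)), ?_, ?_⟩
  · rw [LinearMap.det_toMatrix']
    exact f.isUnit_det'
  · have h1 : (LinearMap.toMatrix' (f : (Fin d → ℝ) →ₗ[ℝ] (Fin d → ℝ))).mulVec v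
        = f v := by
      rw [← Matrix.toLin'_apply, Matrix.toLin'_toMatrix']; rfl
    have h2 : v = b ⟨v, hmem⟩ := (Module.Basis.extend_apply_self hli ⟨v, hmem⟩).symm
    have h3 : f (b ⟨v, hmem⟩) = Pi.single k 1 := by
      rw [Module.Basis.equiv_apply]
      simp [e, e0]
    rw [h1, h2]
    exact h3


lemma Icc_add_Icc' {a b c e : ℝ} (hab : a ≤ b) (hce : c ≤ e) :
    Icc a b + Icc c e = Icc (a + c) (b + e) := by
  apply Subset.antisymm
  · rintro x ⟨u, hu, t, ht, rfl⟩
    exact ⟨add_le_add hu.1 ht.1, add_le_add hu.2 ht.2⟩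
  · rintro x ⟨h1, h2⟩
    refine ⟨max a (x - e), ⟨le_max_left _ _, max_le hab (by linarith)⟩,
      x - max a (x - e), ⟨?_, ?_⟩, by ring⟩
    · rcases max_cases a (x - e) with ⟨h, _⟩ | ⟨h, _⟩ <;> rw [h] <;> linarith
    · rcases max_cases a (x - e) with ⟨h, _⟩ | ⟨h, _⟩ <;> rw [h] <;> linarith

lemma compact_convex_eq_Icc {s : Set ℝ} (hne : s.Nonempty) (hc : IsCompact s)
    (hconv : Convex ℝ s) : s = Icc (sInf s) (sSup s) := by
  apply Subset.antisymm
  · exact fun x hx => ⟨csInf_le hc.bddBelow hx, le_csSup hc.bddAbove hx⟩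
  · exact hconv.ordConnected.out (hc.sInf_mem hne) (hc.sSup_mem hne)

lemma volume_add_Icc01 {s : Set ℝ} (hc : IsCompact s) (hconv : Convex ℝ s)
    (hne : s.Nonempty) : volume (s + Icc (0:ℝ) 1) = volume s + 1 := by
  have hab : sInf s ≤ sSup s := by
    obtain ⟨x, hx⟩ := hne
    exact le_trans (csInf_le hc.bddBelow hx) (le_csSup hc.bddAbove hx)
  rw [compact_convex_eq_Icc hne hc hconv, Icc_add_Icc' hab zero_le_one,
    Real.volume_Icc, Real.volume_Icc, add_zero]
  rw [show sSup s + 1 - sInf s = (sSup s - sInf s) + 1 by ring,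
    ENNReal.ofReal_add (by linarith) zero_le_one, ENNReal.ofReal_one]

lemma volume_slab {d' : ℕ} (K : Set (Fin (d'+1) → ℝ)) (hc : IsCompact K) (hconv : Convex ℝ K) :
    volume {z | ∃ y ∈ K, ∃ t ∈ Icc (0:ℝ) 1, z = y + t • (Pi.single (Fin.last d') 1 : Fin (d'+1) → ℝ)}
      = volume K + volume ((fun y => y ∘ Fin.castSucc) '' K) := by
  classical
  set eL : Fin (d'+1) → ℝ := (Pi.single (Fin.last d') 1 : Fin (d'+1) → ℝ) with heL
  set Q : Set (Fin (d'+1) → ℝ) := {z | ∃ y ∈ K, ∃ t ∈ Icc (0:ℝ) 1, z = y + t • eL} with hQ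
  have heL_last : eL (Fin.last d') = 1 := Pi.single_eq_same _ _
  have heL_cast : ∀ j : Fin d', eL (Fin.castSucc j) = 0 := fun j =>
    Pi.single_eq_of_ne (Fin.castSucc_lt_last j).ne 1
  set π : (Fin (d'+1) → ℝ) → (Fin d' → ℝ) := fun y => y ∘ Fin.castSucc with hπ
  have hπcont : Continuous π := continuous_pi fun j => continuous_apply _
  have hQc : IsCompact Q := by
    have : Q = (fun p : (Fin (d'+1) → ℝ) × ℝ => p.1 + p.2 • eL) '' (K ×ˢ Icc 0 1) := by
      ext z
      simp only [hQ, Set.mem_setOf_eq, Set.mem_image, Set.mem_prod, Prod.exists]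
      constructor
      · rintro ⟨y, hy, t, ht, rfl⟩; exact ⟨y, t, ⟨hy, ht⟩, rfl⟩
      · rintro ⟨y, t, ⟨hy, ht⟩, rfl⟩; exact ⟨y, hy, t, ht, rfl⟩
    rw [this]
    exact (hc.prod isCompact_Icc).image (by fun_prop)
  have hQm : MeasurableSet Q := hQc.isClosed.measurableSet
  have hKm : MeasurableSet K := hc.isClosed.measurableSet
  have hPKc : IsCompact (π '' K) := hc.image hπcont
  have hPKm : MeasurableSet (π '' K) := hPKc.isClosed.measurableSet
  set ψ : (Fin (d'+1) → ℝ) ≃ᵐ ℝ × (Fin d' → ℝ) :=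
    MeasurableEquiv.piFinSuccAbove (fun _ : Fin (d'+1) => ℝ) (Fin.last d') with hψdef
  have hψ : MeasurePreserving ψ volume volume :=
    volume_preserving_piFinSuccAbove (fun _ : Fin (d'+1) => ℝ) (Fin.last d')
  have hψ_apply : ∀ x : Fin (d'+1) → ℝ, ψ x = (x (Fin.last d'), x ∘ Fin.castSucc) := by
    intro x
    have h1 : ψ x = (x (Fin.last d'), fun j => x ((Fin.last d').succAbove j)) := rfl
    rw [h1]
    congr 1
    funext j
    rw [Fin.succAbove_last]
    rfl
  have key : ∀ S : Set (Fin (d'+1) → ℝ), MeasurableSet S →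
      volume S = (volume.prod volume) (ψ.symm ⁻¹' S) := by
    intro S hS
    exact ((hψ.symm ψ).measure_preimage hS.nullMeasurableSet).symm
  have hmem : ∀ (S : Set (Fin (d'+1) → ℝ)) (t : ℝ) (w : Fin d' → ℝ),
      (t, w) ∈ ψ.symm ⁻¹' S ↔ ∃ z ∈ S, z (Fin.last d') = t ∧ z ∘ Fin.castSucc = w := by
    intro S t w
    rw [← MeasurableEquiv.image_eq_preimage_symm]
    constructor
    · rintro ⟨z, hz, hez⟩
      rw [hψ_apply z] at hez
      exact ⟨z, hz, (Prod.ext_iff.1 hez).1, (Prod.ext_iff.1 hez).2⟩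
    · rintro ⟨z, hz, h1, h2⟩
      exact ⟨z, hz, by rw [hψ_apply z, h1, h2]⟩
  have hsliceK : ∀ w, (fun t => (t, w)) ⁻¹' (ψ.symm ⁻¹' K)
      = (fun y => y (Fin.last d')) '' (K ∩ π ⁻¹' {w}) := by
    intro w
    ext t
    rw [mem_preimage, hmem K t w]
    simp only [mem_image, mem_inter_iff, mem_preimage, mem_singleton_iff]
    constructor
    · rintro ⟨z, hz, h1, h2⟩; exact ⟨z, ⟨hz, h2⟩, h1⟩
    · rintro ⟨z, ⟨hz, h2⟩, h1⟩; exact ⟨z, hz, h1, h2⟩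
  have hsliceQ : ∀ w, (fun t => (t, w)) ⁻¹' (ψ.symm ⁻¹' Q)
      = ((fun t => (t, w)) ⁻¹' (ψ.symm ⁻¹' K)) + Icc (0:ℝ) 1 := by
    intro w
    ext t
    rw [mem_preimage, hmem Q t w]
    constructor
    · rintro ⟨z, ⟨y, hy, s, hs, rfl⟩, h1, h2⟩
      have hw : y ∘ Fin.castSucc = w := by
        funext j
        have := congrFun h2 j
        simpa [heL_cast j] using this
      have ht : y (Fin.last d') + s = t := by
        rw [← h1]
        simp [heL_last]
      rw [← ht]
      refine Set.add_mem_add ?_ hs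
      rw [mem_preimage, hmem K _ w]
      exact ⟨y, hy, rfl, hw⟩
    · rintro ⟨a, ha, s, hs, rfl⟩
      rw [mem_preimage, hmem K a w] at ha
      obtain ⟨y, hy, h1, h2⟩ := ha
      refine ⟨y + s • eL, ⟨y, hy, s, hs, rfl⟩, by simp [h1, heL_last], ?_⟩
      funext j
      simpa [heL_cast j] using congrFun h2 j
  have hKslice_c : ∀ w, IsCompact ((fun y => y (Fin.last d')) '' (K ∩ π ⁻¹' {w})) := fun w =>
    (hc.inter_right ((isClosed_singleton).preimage hπcont)).image (continuous_apply _)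
  have hKslice_conv : ∀ w, Convex ℝ ((fun y => y (Fin.last d')) '' (K ∩ π ⁻¹' {w})) := by
    intro w
    have h1 : Convex ℝ (K ∩ π ⁻¹' {w}) :=
      hconv.inter ((convex_singleton w).linear_preimage (LinearMap.funLeft ℝ ℝ Fin.castSucc))
    exact h1.linear_image (LinearMap.proj (Fin.last d'))
  have hslice_ne : ∀ w, w ∈ π '' K ↔
      ((fun y => y (Fin.last d')) '' (K ∩ π ⁻¹' {w})).Nonempty := by
    intro w
    constructor
    · rintro ⟨y, hy, rfl⟩; exact ⟨y (Fin.last d'), y, ⟨hy, rfl⟩, rfl⟩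
    · rintro ⟨t, y, ⟨hy, hw⟩, rfl⟩; exact ⟨y, hy, hw⟩
  have hvol_slice : ∀ w, volume ((fun t => (t, w)) ⁻¹' (ψ.symm ⁻¹' Q))
      = volume ((fun t => (t, w)) ⁻¹' (ψ.symm ⁻¹' K))
        + (π '' K).indicator (fun _ => (1:ℝ≥0∞)) w := by
    intro w
    rw [hsliceQ w, hsliceK w]
    by_cases hw : w ∈ π '' K
    · rw [indicator_of_mem hw]
      exact volume_add_Icc01 (hKslice_c w) (hKslice_conv w) ((hslice_ne w).1 hw)
    · rw [indicator_of_notMem hw]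
      have hemp : (fun y => y (Fin.last d')) '' (K ∩ π ⁻¹' {w}) = ∅ := by
        rw [← not_nonempty_iff_eq_empty]
        exact fun h => hw ((hslice_ne w).2 h)
      rw [hemp, Set.empty_add]
      simp
  have hQ' : MeasurableSet (ψ.symm ⁻¹' Q) := hQm.preimage ψ.symm.measurable
  have hK' : MeasurableSet (ψ.symm ⁻¹' K) := hKm.preimage ψ.symm.measurable
  rw [key Q hQm, key K hKm, Measure.prod_apply_symm hQ', Measure.prod_apply_symm hK']
  have hmeas1 : Measurable fun w => volume ((fun t => (t, w)) ⁻¹' (ψ.symm ⁻¹' K)) :=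
    measurable_measure_prodMk_right hK'
  calc ∫⁻ w, volume ((fun t => (t, w)) ⁻¹' (ψ.symm ⁻¹' Q))
      = ∫⁻ w, (volume ((fun t => (t, w)) ⁻¹' (ψ.symm ⁻¹' K))
          + (π '' K).indicator (fun _ => (1:ℝ≥0∞)) w) := by
        exact lintegral_congr hvol_slice
    _ = (∫⁻ w, volume ((fun t => (t, w)) ⁻¹' (ψ.symm ⁻¹' K)))
          + ∫⁻ w, (π '' K).indicator (fun _ => (1:ℝ≥0∞)) w := by
        exact lintegral_add_left hmeas1 _
    _ = (∫⁻ w, volume ((fun t => (t, w)) ⁻¹' (ψ.symm ⁻¹' K))) + volume (π '' K) := by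
        rw [lintegral_indicator hPKm]
        simp

lemma map_castSucc_preimage {n : ℕ} (C : Finset (Fin n)) :
    (C.map Fin.castSuccEmb).preimage Fin.castSucc
      ((Fin.castSucc_injective n).injOn) = C := by
  ext j
  rw [Finset.mem_preimage, Finset.mem_map]
  constructor
  · rintro ⟨a, ha, hae⟩
    rw [Fin.coe_castSuccEmb] at hae
    rwa [← Fin.castSucc_injective n hae]
  · intro hj
    exact ⟨j, hj, rfl⟩

lemma preimage_map_castSucc {n : ℕ} (B : Finset (Fin (n+1))) (hB : Fin.last n ∉ B) :
    (B.preimage Fin.castSucc ((Fin.castSucc_injective n).injOn)).map Fin.castSuccEmb = B := by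
  ext x
  simp only [Finset.mem_map, Finset.mem_preimage, Fin.coe_castSuccEmb]
  constructor
  · rintro ⟨y, hy, rfl⟩; exact hy
  · intro hx
    have hxne : x ≠ Fin.last n := fun h => hB (h ▸ hx)
    obtain ⟨y, rfl⟩ := Fin.eq_castSucc_of_ne_last hxne
    exact ⟨y, hx, rfl⟩

lemma sum_finset_fin_succ {n : ℕ} (g : Finset (Fin (n+1)) → ℝ) :
    ∑ B : Finset (Fin (n+1)), g B
      = (∑ C : Finset (Fin n), g (C.map Fin.castSuccEmb))
        + ∑ C : Finset (Fin n), g (insert (Fin.last n) (C.map Fin.castSuccEmb)) := by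
  classical
  rw [← Finset.sum_filter_add_sum_filter_not Finset.univ (fun B => Fin.last n ∉ B) g]
  congr 1
  · refine (Finset.sum_bij' (fun B _ => B.preimage Fin.castSucc ((Fin.castSucc_injective n).injOn))
      (fun C _ => C.map Fin.castSuccEmb) ?_ ?_ ?_ ?_ ?_).symm.symm
    · intro B hB
      exact Finset.mem_univ _
    · intro C _
      simp only [Finset.mem_filter, Finset.mem_univ, true_and, Finset.mem_map,
        Fin.coe_castSuccEmb]
      rintro ⟨a, _, hae⟩
      exact (Fin.castSucc_lt_last a).ne hae
    · intro B hB
      simp only [Finset.mem_filter, Finset.mem_univ, true_and] at hB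
      exact preimage_map_castSucc B hB
    · intro C _
      exact map_castSucc_preimage C
    · intro B hB
      simp only [Finset.mem_filter, Finset.mem_univ, true_and] at hB
      rw [preimage_map_castSucc B hB]
  · refine (Finset.sum_bij' (fun B _ => (B.erase (Fin.last n)).preimage Fin.castSucc
      ((Fin.castSucc_injective n).injOn))
      (fun C _ => insert (Fin.last n) (C.map Fin.castSuccEmb)) ?_ ?_ ?_ ?_ ?_).symm.symm
    · intro B hB
      exact Finset.mem_univ _
    · intro C _
      simp only [Finset.mem_filter, Finset.mem_univ, true_and, not_not]
      exact Finset.mem_insert_self _ _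
    · intro B hB
      simp only [Finset.mem_filter, Finset.mem_univ, true_and, not_not] at hB
      show insert (Fin.last n) (Finset.map Fin.castSuccEmb ((B.erase (Fin.last n)).preimage
        Fin.castSucc ((Fin.castSucc_injective n).injOn))) = B
      rw [preimage_map_castSucc _ (Finset.notMem_erase _ _), Finset.insert_erase hB]
    · intro C _
      show ((insert (Fin.last n) (C.map Fin.castSuccEmb)).erase (Fin.last n)).preimage
        Fin.castSucc ((Fin.castSucc_injective n).injOn) = C
      rw [Finset.erase_insert ?hni, map_castSucc_preimage C]
      case hni =>
        simp only [Finset.mem_map, Fin.coe_castSuccEmb]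
        rintro ⟨a, _, hae⟩
        exact (Fin.castSucc_lt_last a).ne hae
    · intro B hB
      simp only [Finset.mem_filter, Finset.mem_univ, true_and, not_not] at hB
      show g B = g (insert (Fin.last n) (Finset.map Fin.castSuccEmb ((B.erase
        (Fin.last n)).preimage Fin.castSucc ((Fin.castSucc_injective n).injOn))))
      rw [preimage_map_castSucc _ (Finset.notMem_erase _ _), Finset.insert_erase hB]

lemma orderEmbOfFin_map {n k : ℕ} (C : Finset (Fin n)) (h' : C.card = k)
    (h : (C.map Fin.castSuccEmb).card = k) (i : Fin k) :
    (C.map Fin.castSuccEmb).orderEmbOfFin h i = Fin.castSucc (C.orderEmbOfFin h' i) := by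
  have huniq := Finset.orderEmbOfFin_unique h
    (f := fun i => Fin.castSucc (C.orderEmbOfFin h' i)) ?_ ?_
  · exact (congrFun huniq i).symm
  · intro x
    exact Finset.mem_map.2 ⟨C.orderEmbOfFin h' x, Finset.orderEmbOfFin_mem C h' x, rfl⟩
  · exact Fin.strictMono_castSucc.comp (C.orderEmbOfFin h').strictMono

lemma orderEmbOfFin_insert_last {n d' : ℕ} (C : Finset (Fin n)) (h' : C.card = d')
    (h : (insert (Fin.last n) (C.map Fin.castSuccEmb)).card = d' + 1) (i : Fin (d'+1)) :
    (insert (Fin.last n) (C.map Fin.castSuccEmb)).orderEmbOfFin h i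
      = (Fin.snoc (fun j => Fin.castSucc (C.orderEmbOfFin h' j)) (Fin.last n)
          : Fin (d'+1) → Fin (n+1)) i := by
  have huniq := Finset.orderEmbOfFin_unique h
    (f := (Fin.snoc (fun j => Fin.castSucc (C.orderEmbOfFin h' j)) (Fin.last n)
          : Fin (d'+1) → Fin (n+1))) ?_ ?_
  · exact (congrFun huniq i).symm
  · intro x
    refine Fin.lastCases ?_ ?_ x
    · rw [Fin.snoc_last]
      exact Finset.mem_insert_self _ _
    · intro j
      rw [Fin.snoc_castSucc]
      exact Finset.mem_insert_of_mem
        (Finset.mem_map.2 ⟨C.orderEmbOfFin h' j, Finset.orderEmbOfFin_mem C h' j, rfl⟩)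
  · intro a b hab
    rcases Fin.eq_castSucc_or_eq_last b with ⟨b', rfl⟩ | rfl
    · have hane : a ≠ Fin.last d' := Fin.ne_last_of_lt (lt_trans hab (Fin.castSucc_lt_last b'))
      obtain ⟨a', rfl⟩ := Fin.eq_castSucc_of_ne_last hane
      rw [Fin.snoc_castSucc, Fin.snoc_castSucc]
      exact Fin.strictMono_castSucc ((C.orderEmbOfFin h').strictMono
        (Fin.castSucc_lt_castSucc_iff.1 hab))
    · have hane : a ≠ Fin.last d' := Fin.ne_last_of_lt hab
      obtain ⟨a', rfl⟩ := Fin.eq_castSucc_of_ne_last hane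
      rw [Fin.snoc_castSucc, Fin.snoc_last]
      exact Fin.castSucc_lt_last _

lemma det_insert_last {d' n : ℕ} (M : Matrix (Fin (d'+1)) (Fin (n+1)) ℝ)
    (hcol : ∀ i, M i (Fin.last n) = (Pi.single (Fin.last d') 1 : Fin (d'+1) → ℝ) i)
    (C : Finset (Fin n)) (h' : C.card = d')
    (h : (insert (Fin.last n) (C.map Fin.castSuccEmb)).card = d' + 1) :
    (M.submatrix id ((insert (Fin.last n) (C.map Fin.castSuccEmb)).orderEmbOfFin h)).det
      = (((M.submatrix id Fin.castSucc).submatrix Fin.castSucc id).submatrix id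
          (C.orderEmbOfFin h')).det := by
  set N := M.submatrix id ((insert (Fin.last n) (C.map Fin.castSuccEmb)).orderEmbOfFin h) with hN
  have hNcol : ∀ i, N i (Fin.last d') = (Pi.single (Fin.last d') 1 : Fin (d'+1) → ℝ) i := by
    intro i
    rw [hN, Matrix.submatrix_apply, orderEmbOfFin_insert_last C h' h, Fin.snoc_last, id_eq]
    exact hcol i
  rw [Matrix.det_succ_column N (Fin.last d')]
  rw [Finset.sum_eq_single (Fin.last d')]
  · rw [hNcol (Fin.last d'), Pi.single_eq_same]
    have hsign : (-1 : ℝ) ^ ((Fin.last d' : ℕ) + (Fin.last d' : ℕ)) = 1 :=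
      Even.neg_one_pow ⟨(Fin.last d' : ℕ), rfl⟩
    rw [hsign, one_mul, one_mul]
    congr 1
    ext i k
    rw [Matrix.submatrix_apply, hN, Matrix.submatrix_apply, id_eq,
      orderEmbOfFin_insert_last C h' h]
    simp [Fin.succAbove_last, Fin.snoc_castSucc, Matrix.submatrix_apply]
  · intro i _ hne
    rw [hNcol i, Pi.single_eq_of_ne hne, mul_zero, zero_mul]
  · intro hmem
    exact absurd (Finset.mem_univ _) hmem

lemma sum_map_eq {d n : ℕ} (M : Matrix (Fin d) (Fin (n+1)) ℝ) :
    (∑ C : Finset (Fin n), if h : (C.map Fin.castSuccEmb).card = d then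
        |(M.submatrix id ((C.map Fin.castSuccEmb).orderEmbOfFin h)).det| else 0)
      = zS (M.submatrix id Fin.castSucc) := by
  unfold zS
  refine Finset.sum_congr rfl fun C _ => ?_
  by_cases hC : C.card = d
  · rw [dif_pos ((Finset.card_map _).trans hC), dif_pos hC]
    congr 1
    have : M.submatrix id ((C.map Fin.castSuccEmb).orderEmbOfFin
        ((Finset.card_map _).trans hC))
        = (M.submatrix id Fin.castSucc).submatrix id (C.orderEmbOfFin hC) := by
      ext i k
      rw [Matrix.submatrix_apply, orderEmbOfFin_map C hC, Matrix.submatrix_apply,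
        Matrix.submatrix_apply]
      rfl
    rw [this]
  · rw [dif_neg, dif_neg hC]
    rw [Finset.card_map]
    exact hC

lemma card_insert_last {n : ℕ} (C : Finset (Fin n)) :
    (insert (Fin.last n) (C.map Fin.castSuccEmb)).card = C.card + 1 := by
  rw [Finset.card_insert_of_notMem, Finset.card_map]
  simp only [Finset.mem_map, Fin.coe_castSuccEmb]
  rintro ⟨a, _, hae⟩
  exact (Fin.castSucc_lt_last a).ne hae

lemma zS_succ {d' n : ℕ} (M : Matrix (Fin (d'+1)) (Fin (n+1)) ℝ)
    (hcol : ∀ i, M i (Fin.last n) = (Pi.single (Fin.last d') 1 : Fin (d'+1) → ℝ) i) :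
    zS M = zS (M.submatrix id Fin.castSucc)
      + zS ((M.submatrix id Fin.castSucc).submatrix Fin.castSucc id) := by
  conv_lhs => rw [zS, sum_finset_fin_succ]
  congr 1
  · exact sum_map_eq M
  · unfold zS
    refine Finset.sum_congr rfl fun C _ => ?_
    by_cases hC : C.card = d'
    · rw [dif_pos (by rw [card_insert_last, hC]), dif_pos hC]
      congr 1
      exact det_insert_last M hcol C hC _
    · rw [dif_neg, dif_neg hC]
      rw [card_insert_last]
      exact fun hcon => hC (Nat.succ_injective hcon)

lemma zS_succ_zero {d n : ℕ} (M : Matrix (Fin d) (Fin (n+1)) ℝ)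
    (hcol : ∀ i, M i (Fin.last n) = 0) :
    zS M = zS (M.submatrix id Fin.castSucc) := by
  conv_lhs => rw [zS, sum_finset_fin_succ]
  rw [← sum_map_eq M]
  rw [show (∑ C : Finset (Fin n), if h : (insert (Fin.last n) (C.map Fin.castSuccEmb)).card = d
      then |(M.submatrix id ((insert (Fin.last n)
        (C.map Fin.castSuccEmb)).orderEmbOfFin h)).det| else 0) = 0 from ?_, add_zero]
  refine Finset.sum_eq_zero fun C _ => ?_
  by_cases hC : (insert (Fin.last n) (C.map Fin.castSuccEmb)).card = d
  · rw [dif_pos hC]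
    have hlast : Fin.last n ∈ insert (Fin.last n) (C.map Fin.castSuccEmb) :=
      Finset.mem_insert_self _ _
    have : ∃ k0, (insert (Fin.last n) (C.map Fin.castSuccEmb)).orderEmbOfFin hC k0
        = Fin.last n := by
      have hr := Finset.range_orderEmbOfFin (insert (Fin.last n) (C.map Fin.castSuccEmb)) hC
      have : Fin.last n ∈ Set.range
          ⇑((insert (Fin.last n) (C.map Fin.castSuccEmb)).orderEmbOfFin hC) := by
        rw [hr]
        exact Finset.mem_coe.2 hlast
      exact Set.mem_range.1 this
    obtain ⟨k0, hk0⟩ := this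
    rw [Matrix.det_eq_zero_of_column_eq_zero k0, abs_zero]
    intro i
    rw [Matrix.submatrix_apply, hk0, id_eq]
    exact hcol i
  · rw [dif_neg hC]

lemma zS_zero_dim {n : ℕ} (M : Matrix (Fin 0) (Fin n) ℝ) : zS M = 1 := by
  unfold zS
  rw [Finset.sum_eq_single ∅]
  · rw [dif_pos Finset.card_empty]
    simp [Matrix.det_fin_zero]
  · intro B _ hBne
    rw [dif_neg]
    exact fun hcon => hBne (Finset.card_eq_zero.1 hcon)
  · intro hmem
    exact absurd (Finset.mem_univ _) hmem


lemma zonotope_zero_dim {n : ℕ} (M : Matrix (Fin 0) (Fin n) ℝ) : zonotope M = Set.univ := by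
  rw [Set.eq_univ_iff_forall]
  intro y
  exact ⟨fun _ => 0, fun i => ⟨le_rfl, zero_le_one⟩, Subsingleton.elim _ _⟩

lemma volume_univ_zero_dim : (volume : Measure (Fin 0 → ℝ)) Set.univ = 1 := by
  simp [MeasureTheory.volume_pi, MeasureTheory.Measure.pi_univ]

lemma zonotope_volume : ∀ (n d : ℕ) (M : Matrix (Fin d) (Fin n) ℝ),
    volume (zonotope M) = ENNReal.ofReal (zS M) := by
  intro n
  induction n with
  | zero =>
    intro d M
    rcases d with _ | d'
    · rw [zonotope_zero_dim M, volume_univ_zero_dim, zS_zero_dim, ENNReal.ofReal_one]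
    · have hz : zonotope M = {0} := by
        ext y
        constructor
        · rintro ⟨x, _, rfl⟩
          have : M.mulVec x = 0 := by
            funext i
            simp [Matrix.mulVec, dotProduct]
          simp [this]
        · rintro rfl
          exact ⟨fun i => i.elim0, fun i => i.elim0, by
            funext i
            simp [Matrix.mulVec, dotProduct]⟩
      have hS : zS M = 0 := by
        unfold zS
        refine Finset.sum_eq_zero fun B _ => ?_
        rw [dif_neg]
        have : B.card ≤ 0 := by
          simpa using Finset.card_le_univ B
        omega
      rw [hz, hS, ENNReal.ofReal_zero]
      have h1 : ({0} : Set (Fin (d'+1) → ℝ)) = ((⊥ : Submodule ℝ (Fin (d'+1) → ℝ)) : Set _) := by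
        rw [Submodule.bot_coe]
      rw [h1]
      exact Measure.addHaar_submodule _ _ bot_ne_top
  | succ n ih =>
    intro d M
    rcases d with _ | d'
    · rw [zonotope_zero_dim M, volume_univ_zero_dim, zS_zero_dim, ENNReal.ofReal_one]
    · by_cases hv : (fun i => M i (Fin.last n)) = 0
      · rw [zonotope_succ M]
        have hset : {z | ∃ y ∈ zonotope (M.submatrix id Fin.castSucc),
            ∃ t ∈ Icc (0:ℝ) 1, z = y + t • fun i => M i (Fin.last n)}
            = zonotope (M.submatrix id Fin.castSucc) := by
          ext z
          constructor
          · rintro ⟨y, hy, t, ht, rfl⟩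
            have : (fun i => M i (Fin.last n)) = (0 : Fin (d'+1) → ℝ) := hv
            rw [this, smul_zero, add_zero]
            exact hy
          · intro hz
            exact ⟨z, hz, 0, ⟨le_rfl, zero_le_one⟩, by
              have : (fun i => M i (Fin.last n)) = (0 : Fin (d'+1) → ℝ) := hv
              rw [this, smul_zero, add_zero]⟩
        rw [hset, ih _ _, zS_succ_zero M (fun i => congrFun hv i)]
      · obtain ⟨T, hTdet, hTv⟩ := exists_mat _ hv (Fin.last d')
        have hTne : T.det ≠ 0 := hTdet.ne_zero
        have habs : (0:ℝ) < |T.det| := abs_pos.2 hTne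
        have key : volume (zonotope (T * M)) = ENNReal.ofReal (zS (T * M)) := by
          have hNlast : ∀ i, (T * M) i (Fin.last n)
              = (Pi.single (Fin.last d') 1 : Fin (d'+1) → ℝ) i := by
            intro i
            have h0 := congrFun hTv i
            rw [← h0]
            simp [Matrix.mulVec, dotProduct, Matrix.mul_apply]
          rw [zonotope_succ (T * M)]
          have hfun : (fun i => (T * M) i (Fin.last n))
              = (Pi.single (Fin.last d') 1 : Fin (d'+1) → ℝ) := funext hNlast
          rw [hfun, volume_slab _ (isCompact_zonotope _) (convex_zonotope _), proj_zonotope,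
            ih _ _, ih _ _, ← ENNReal.ofReal_add (zS_nonneg _) (zS_nonneg _),
            ← zS_succ (T * M) hNlast]
        rw [volume_zonotope_mul, zS_mul, ENNReal.ofReal_mul (abs_nonneg _)] at key
        exact (ENNReal.mul_right_inj (ENNReal.ofReal_pos.2 habs).ne' ENNReal.ofReal_ne_top).1 key

theorem stmt4 (d n : ℕ) (M : Matrix (Fin d) (Fin n) ℝ)
    (hrank : M.rank = d) :
    volume (zonotope M) =
      ENNReal.ofReal (∑ B : Finset (Fin n),
        if h : B.card = d then |(M.submatrix id (B.orderEmbOfFin h)).det| else 0) := by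
  exact zonotope_volume n d M
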